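/- For -1 < α < 0 and m a nonnegative integer, ∫_0^∞ x^α e^{-x} / (L_m^{-α-1}(-x))^2 dx = m!·(-1)^m·Γ(1 + α - m) = Γ(α+1)·Γ(-α)·m! / Γ(m - α). -/

import Mathlib

open Finset

/-- Generalized Laguerre polynomial `L_n^α(x) = ∑_{k=0}^n (-1)^k binom(n+α, n-k) x^k / k!`. -/
noncomputable def lag (α : ℝ) (n : ℕ) (x : ℝ) : ℝ :=
  ∑ k ∈ Finset.range (n + 1),
    (-1 : ℝ) ^ k * (∏ j ∈ Finset.range (n - k), (α + (k : ℝ) + 1 + (j : ℝ))) /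
      ((Nat.factorial (n - k) : ℝ) * (Nat.factorial k : ℝ)) * x ^ k

/-- Generalized Laguerre polynomial with integer index, with the convention
`L_n^α := 0` for `n < 0`. -/
noncomputable def lagZ (α : ℝ) (n : ℤ) (x : ℝ) : ℝ :=
  if 0 ≤ n then lag α n.toNat x else 0

open MeasureTheory

namespace T3

noncomputable def lcoef (β : ℝ) (n k : ℕ) : ℝ :=
  (-1 : ℝ) ^ k * (∏ j ∈ Finset.range (n - k), (β + (k : ℝ) + 1 + (j : ℝ))) /
      ((Nat.factorial (n - k) : ℝ) * (Nat.factorial k : ℝ))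

lemma lag_eq_sum (β : ℝ) (n : ℕ) (x : ℝ) :
    lag β n x = ∑ k ∈ Finset.range (n + 1), lcoef β n k * x ^ k := rfl

lemma lag_zero (β : ℝ) (x : ℝ) : lag β 0 x = 1 := by
  simp [lag, Nat.factorial]

lemma lcoef_deriv (β : ℝ) (n k : ℕ) :
    ((k : ℝ) + 1) * lcoef β (n+1) (k+1) = -(lcoef (β+1) n k) := by
  unfold lcoef
  have h : n + 1 - (k+1) = n - k := by omega
  rw [h]
  have h2 : ∏ j ∈ Finset.range (n - k), (β + ((k+1:ℕ) : ℝ) + 1 + (j : ℝ))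
      = ∏ j ∈ Finset.range (n - k), ((β+1) + (k : ℝ) + 1 + (j : ℝ)) := by
    apply Finset.prod_congr rfl; intro j _; push_cast; ring
  push_cast at h2 ⊢
  rw [h2, Nat.factorial_succ]
  have hk : (Nat.factorial k : ℝ) ≠ 0 := Nat.cast_ne_zero.2 (Nat.factorial_ne_zero k)
  have hnk : (Nat.factorial (n-k) : ℝ) ≠ 0 := Nat.cast_ne_zero.2 (Nat.factorial_ne_zero _)
  push_cast
  field_simp
  ring

lemma hasDerivAt_lag (β : ℝ) (n : ℕ) (x : ℝ) :
    HasDerivAt (fun y => lag β (n+1) y) (-(lag (β+1) n x)) x := by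
  have h : HasDerivAt (fun y => ∑ k ∈ Finset.range (n + 2), lcoef β (n+1) k * y ^ k)
      (∑ k ∈ Finset.range (n + 2), lcoef β (n+1) k * ((k : ℝ) * x ^ (k-1))) x := by
    apply HasDerivAt.fun_sum
    intro k _
    exact (hasDerivAt_pow k x).const_mul _
  have heq : (∑ k ∈ Finset.range (n + 2), lcoef β (n+1) k * ((k : ℝ) * x ^ (k-1)))
      = -(lag (β+1) n x) := by
    rw [Finset.sum_range_succ']
    simp only [Nat.cast_zero, zero_mul, mul_zero, add_zero]
    rw [lag_eq_sum, ← Finset.sum_neg_distrib]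
    apply Finset.sum_congr rfl
    intro k _
    push_cast
    linear_combination x ^ k * lcoef_deriv β n k
  rw [← heq]
  exact h

lemma lcoef_top (β : ℝ) (n : ℕ) : lcoef β n n = (-1)^n / (Nat.factorial n : ℝ) := by
  simp [lcoef]

lemma lcoef_param (β : ℝ) (n k : ℕ) (hk : k ≤ n) :
    lcoef (β+1) (n+1) k = lcoef β (n+1) k + lcoef (β+1) n k := by
  obtain ⟨d, rfl⟩ : ∃ d, n = k + d := ⟨n - k, by omega⟩
  unfold lcoef
  have h1 : k + d + 1 - k = d + 1 := by omega
  have h2 : k + d - k = d := by omega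
  rw [h1, h2]
  have e1 : ∏ j ∈ Finset.range (d+1), ((β+1) + (k : ℝ) + 1 + (j : ℝ))
      = (∏ j ∈ Finset.range d, ((β+1) + (k : ℝ) + 1 + (j : ℝ))) * ((β+1) + k + 1 + d) :=
    Finset.prod_range_succ _ _
  have e2 : ∏ j ∈ Finset.range (d+1), (β + (k : ℝ) + 1 + (j : ℝ))
      = (∏ j ∈ Finset.range d, ((β+1) + (k : ℝ) + 1 + (j : ℝ))) * (β + k + 1) := by
    rw [Finset.prod_range_succ']
    congr 1
    · apply Finset.prod_congr rfl; intro j _; push_cast; ring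
    · push_cast; ring
  rw [e1, e2, Nat.factorial_succ]
  have hk : (Nat.factorial k : ℝ) ≠ 0 := Nat.cast_ne_zero.2 (Nat.factorial_ne_zero k)
  have hd : (Nat.factorial d : ℝ) ≠ 0 := Nat.cast_ne_zero.2 (Nat.factorial_ne_zero d)
  push_cast
  field_simp
  ring

lemma lag_param_succ (β : ℝ) (n : ℕ) (x : ℝ) :
    lag (β+1) (n+1) x = lag β (n+1) x + lag (β+1) n x := by
  rw [lag_eq_sum, lag_eq_sum, lag_eq_sum]
  rw [show n + 1 + 1 = (n+1) + 1 from rfl]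
  rw [Finset.sum_range_succ (fun k => lcoef (β+1) (n+1) k * x ^ k) (n+1),
      Finset.sum_range_succ (fun k => lcoef β (n+1) k * x ^ k) (n+1)]
  rw [lcoef_top, lcoef_top]
  have : ∑ k ∈ Finset.range (n+1), lcoef (β+1) (n+1) k * x ^ k
      = ∑ k ∈ Finset.range (n+1), (lcoef β (n+1) k * x ^ k + lcoef (β+1) n k * x ^ k) := by
    apply Finset.sum_congr rfl
    intro k hk
    have hk' := Finset.mem_range.mp hk
    rw [lcoef_param β n k (by omega : k ≤ n)]
    ring
  rw [this, Finset.sum_add_distrib]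
  ring

lemma lcoef_mid (β : ℝ) (n k : ℕ) (hk : k < n) :
    lcoef (β+1) n k = ((n:ℝ)+β+1) * lcoef β n (k+1) - ((n:ℝ)+1) * lcoef β (n+1) (k+1) := by
  obtain ⟨d, rfl⟩ : ∃ d, n = k + d + 1 := ⟨n - k - 1, by omega⟩
  unfold lcoef
  have h1 : k + d + 1 - k = d + 1 := by omega
  have h2 : k + d + 1 - (k + 1) = d := by omega
  have h3 : k + d + 1 + 1 - (k + 1) = d + 1 := by omega
  rw [h1, h2, h3]
  have eL : ∏ j ∈ Finset.range (d+1), ((β+1) + (k : ℝ) + 1 + (j : ℝ))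
      = (∏ j ∈ Finset.range d, (β + ((k+1:ℕ) : ℝ) + 1 + (j : ℝ))) * (β + (k:ℝ) + 2 + d) := by
    rw [Finset.prod_range_succ]
    congr 1
    · apply Finset.prod_congr rfl; intro j _; push_cast; ring
    · push_cast; ring
  have eB : ∏ j ∈ Finset.range (d+1), (β + ((k+1:ℕ) : ℝ) + 1 + (j : ℝ))
      = (∏ j ∈ Finset.range d, (β + ((k+1:ℕ) : ℝ) + 1 + (j : ℝ))) * (β + (k:ℝ) + 2 + d) := by
    rw [Finset.prod_range_succ]
    congr 1
    push_cast; ring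
  rw [eL, eB, Nat.factorial_succ (k), Nat.factorial_succ (d)]
  have hk' : (Nat.factorial k : ℝ) ≠ 0 := Nat.cast_ne_zero.2 (Nat.factorial_ne_zero k)
  have hd' : (Nat.factorial d : ℝ) ≠ 0 := Nat.cast_ne_zero.2 (Nat.factorial_ne_zero d)
  push_cast
  field_simp
  ring

lemma lcoef_zero (β : ℝ) (n : ℕ) :
    ((n:ℝ)+β+1) * lcoef β n 0 = ((n:ℝ)+1) * lcoef β (n+1) 0 := by
  unfold lcoef
  simp only [Nat.sub_zero]
  rw [Finset.prod_range_succ, Nat.factorial_succ]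
  have hn' : (Nat.factorial n : ℝ) ≠ 0 := Nat.cast_ne_zero.2 (Nat.factorial_ne_zero n)
  push_cast
  field_simp
  ring

lemma lcoef_topmul (β : ℝ) (n : ℕ) :
    lcoef (β+1) n n = -(((n:ℝ)+1) * lcoef β (n+1) (n+1)) := by
  unfold lcoef
  simp only [Nat.sub_self]
  rw [Nat.factorial_succ]
  have hn' : (Nat.factorial n : ℝ) ≠ 0 := Nat.cast_ne_zero.2 (Nat.factorial_ne_zero n)
  push_cast
  simp [Finset.prod_range_zero, pow_succ]
  field_simp

lemma lag_mul_x (β : ℝ) (n : ℕ) (x : ℝ) :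
    x * lag (β+1) n x = ((n:ℝ)+β+1) * lag β n x - ((n:ℝ)+1) * lag β (n+1) x := by
  rw [lag_eq_sum, lag_eq_sum, lag_eq_sum, Finset.mul_sum]
  have hL : ∑ k ∈ Finset.range (n+1), x * (lcoef (β+1) n k * x ^ k)
      = (∑ k ∈ Finset.range n, lcoef (β+1) n k * x ^ (k+1))
        + lcoef (β+1) n n * x ^ (n+1) := by
    rw [← Finset.sum_range_succ (fun k => lcoef (β+1) n k * x ^ (k+1)) n]
    exact Finset.sum_congr rfl fun k _ => by ring
  have hA : ∑ k ∈ Finset.range (n+1), lcoef β n k * x ^ k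
      = (∑ k ∈ Finset.range n, lcoef β n (k+1) * x ^ (k+1)) + lcoef β n 0 := by
    rw [Finset.sum_range_succ' (fun k => lcoef β n k * x ^ k) n]
    simp
  have hB : ∑ k ∈ Finset.range (n+1+1), lcoef β (n+1) k * x ^ k
      = ((∑ k ∈ Finset.range n, lcoef β (n+1) (k+1) * x ^ (k+1))
          + lcoef β (n+1) (n+1) * x ^ (n+1)) + lcoef β (n+1) 0 := by
    rw [Finset.sum_range_succ' (fun k => lcoef β (n+1) k * x ^ k) (n+1)]
    rw [Finset.sum_range_succ (fun k => lcoef β (n+1) (k+1) * x ^ (k+1)) n]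
    simp
  rw [hL, hA, hB]
  have hS : ∑ k ∈ Finset.range n, lcoef (β+1) n k * x ^ (k+1)
      = ((n:ℝ)+β+1) * (∑ k ∈ Finset.range n, lcoef β n (k+1) * x ^ (k+1))
        - ((n:ℝ)+1) * (∑ k ∈ Finset.range n, lcoef β (n+1) (k+1) * x ^ (k+1)) := by
    rw [Finset.mul_sum, Finset.mul_sum, ← Finset.sum_sub_distrib]
    exact Finset.sum_congr rfl fun k hk => by
      linear_combination x^(k+1) * lcoef_mid β n k (Finset.mem_range.mp hk)
  linear_combination hS + x^(n+1) * lcoef_topmul β n - lcoef_zero β n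

/-- positive coefficient form of `L_n^β(-x)` -/
noncomputable def pcoef (β : ℝ) (n k : ℕ) : ℝ :=
  (∏ j ∈ Finset.range (n - k), (β + (k : ℝ) + 1 + (j : ℝ))) /
      ((Nat.factorial (n - k) : ℝ) * (Nat.factorial k : ℝ))

noncomputable def U (β : ℝ) (n : ℕ) (x : ℝ) : ℝ := lag β n (-x)

lemma U_eq_sum (β : ℝ) (n : ℕ) (x : ℝ) :
    U β n x = ∑ k ∈ Finset.range (n + 1), pcoef β n k * x ^ k := by
  rw [U, lag_eq_sum]
  apply Finset.sum_congr rfl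
  intro k _
  rw [lcoef, pcoef, neg_pow]
  have h : ((-1:ℝ))^k * (-1)^k = 1 := by rw [← mul_pow]; norm_num
  linear_combination ((∏ j ∈ Finset.range (n - k), (β + (k:ℝ) + 1 + j)) /
    ((Nat.factorial (n-k) : ℝ) * (Nat.factorial k : ℝ))) * x^k * h

lemma pcoef_pos (β : ℝ) (hβ : -1 < β) (n k : ℕ) : 0 < pcoef β n k := by
  apply div_pos
  · apply Finset.prod_pos
    intro j _
    have : (0:ℝ) ≤ (k:ℝ) + (j:ℝ) := by positivity
    linarith
  · have h1 : (0:ℝ) < (Nat.factorial (n-k) : ℝ) := Nat.cast_pos.2 (Nat.factorial_pos _)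
    have h2 : (0:ℝ) < (Nat.factorial k : ℝ) := Nat.cast_pos.2 (Nat.factorial_pos _)
    positivity

lemma U_pos (β : ℝ) (hβ : -1 < β) (n : ℕ) {x : ℝ} (hx : 0 ≤ x) : 0 < U β n x := by
  rw [U_eq_sum]
  apply Finset.sum_pos'
  · intro k _
    have := pcoef_pos β hβ n k
    positivity
  · refine ⟨0, Finset.mem_range.2 (by omega), ?_⟩
    simpa using pcoef_pos β hβ n 0

lemma U_zero_le (β : ℝ) (hβ : -1 < β) (n : ℕ) {x : ℝ} (hx : 0 ≤ x) :
    U β n 0 ≤ U β n x := by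
  rw [U_eq_sum, U_eq_sum]
  apply Finset.sum_le_sum
  intro k _
  have hp := (pcoef_pos β hβ n k).le
  have : (0:ℝ)^k ≤ x^k := pow_le_pow_left₀ le_rfl hx k
  exact mul_le_mul_of_nonneg_left this hp

lemma continuous_U (β : ℝ) (n : ℕ) : Continuous (fun x => U β n x) := by
  have : (fun x => U β n x) = fun x => ∑ k ∈ Finset.range (n+1), pcoef β n k * x ^ k :=
    funext (U_eq_sum β n)
  rw [this]
  exact continuous_finset_sum _ fun k _ => continuous_const.mul (continuous_pow k)

lemma hasDerivAt_U (β : ℝ) (n : ℕ) (x : ℝ) :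
    HasDerivAt (fun y => U β (n+1) y) (U (β+1) n x) x := by
  have h1 := (hasDerivAt_lag β n (-x)).comp x (hasDerivAt_neg x)
  have : -(lag (β+1) n (-x)) * (-1) = U (β+1) n x := by rw [U]; ring
  rw [← this]
  exact h1

lemma hasDerivAt_U' (β : ℝ) (n : ℕ) (x : ℝ) :
    HasDerivAt (fun y => U β n y) (U (β+1) n x - U β n x) x := by
  cases n with
  | zero =>
    have h : (fun y => U β 0 y) = fun _ : ℝ => (1:ℝ) := funext fun y => lag_zero β (-y)
    have h2 : U (β+1) 0 x - U β 0 x = 0 := by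
      simp [U, lag_zero]
    rw [h, h2]
    exact hasDerivAt_const x 1
  | succ m =>
    have h := hasDerivAt_U β m x
    have e : U (β+1) (m+1) x - U β (m+1) x = U (β+1) m x := by
      have := lag_param_succ β m (-x)
      simp only [U]
      linarith
    rw [e]
    exact h

lemma U_mul_x (β : ℝ) (n : ℕ) (x : ℝ) :
    x * U (β+1) n x = ((n:ℝ)+1) * U β (n+1) x - ((n:ℝ)+β+1) * U β n x := by
  have := lag_mul_x β n (-x)
  simp only [U]
  linarith

end T3

open T3 Filter Topology

section Analysis

variable {α : ℝ}

lemma g_cont (hα1 : -1 < α) (hα2 : α < 0) (m : ℕ) :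
    ContinuousOn (fun x => x ^ α * Real.exp (-x) / (U (-α-1) m x)^2) (Set.Ioi (0:ℝ)) := by
  have hβ : (-1:ℝ) < -α-1 := by linarith
  apply ContinuousOn.div
  · exact (continuousOn_id.rpow_const fun x hx => Or.inl (ne_of_gt hx)).mul
      (Real.continuous_exp.comp continuous_neg).continuousOn
  · exact ((continuous_U (-α-1) m).pow 2).continuousOn
  · intro x hx
    exact pow_ne_zero 2 (U_pos (-α-1) hβ m (le_of_lt hx)).ne'

lemma g_int (hα1 : -1 < α) (hα2 : α < 0) (m : ℕ) :
    IntegrableOn (fun x => x ^ α * Real.exp (-x) / (U (-α-1) m x)^2) (Set.Ioi (0:ℝ)) := by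
  have hβ : (-1:ℝ) < -α-1 := by linarith
  have hU0 : 0 < U (-α-1) m 0 := U_pos (-α-1) hβ m le_rfl
  apply Integrable.mono'
    (g := fun x => (1/(U (-α-1) m 0)^2) * (Real.exp (-x) * x ^ (α + 1 - 1)))
  · exact (Real.GammaIntegral_convergent (by linarith : (0:ℝ) < α + 1)).const_mul _
  · exact (g_cont hα1 hα2 m).aestronglyMeasurable measurableSet_Ioi
  · filter_upwards [ae_restrict_mem measurableSet_Ioi] with x hx
    have hx0 : (0:ℝ) < x := hx
    have hUx : U (-α-1) m 0 ≤ U (-α-1) m x := U_zero_le (-α-1) hβ m hx0.le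
    have hrp : (0:ℝ) < x ^ α := Real.rpow_pos_of_pos hx0 α
    have hexp : (0:ℝ) < Real.exp (-x) := Real.exp_pos _
    have hUxpos : 0 < U (-α-1) m x := U_pos (-α-1) hβ m hx0.le
    rw [Real.norm_eq_abs, abs_of_nonneg (by positivity)]
    rw [show α + 1 - 1 = α by ring]
    have h2 : (U (-α-1) m 0)^2 ≤ (U (-α-1) m x)^2 := by nlinarith
    calc x ^ α * Real.exp (-x) / (U (-α-1) m x)^2
        ≤ x ^ α * Real.exp (-x) / (U (-α-1) m 0)^2 :=
          div_le_div_of_nonneg_left (by positivity) (by positivity) h2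
      _ = 1/(U (-α-1) m 0)^2 * (Real.exp (-x) * x ^ α) := by ring

lemma step_eq (hα1 : -1 < α) (hα2 : α < 0) (m : ℕ) :
    ((m:ℝ) - α) * (∫ x in Set.Ioi (0:ℝ), x ^ α * Real.exp (-x) / (U (-α-1) (m+1) x)^2)
      = ((m:ℝ) + 1) * (∫ x in Set.Ioi (0:ℝ), x ^ α * Real.exp (-x) / (U (-α-1) m x)^2) := by
  have hβ : (-1:ℝ) < -α-1 := by linarith
  set β : ℝ := -α - 1 with hβdef
  set F : ℝ → ℝ := fun x => x ^ (α+1) * Real.exp (-x) / (U β (m+1) x * U β m x) with hF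
  set f' : ℝ → ℝ := fun x =>
      ((m:ℝ) - α) * (x ^ α * Real.exp (-x) / (U β (m+1) x)^2)
      - ((m:ℝ) + 1) * (x ^ α * Real.exp (-x) / (U β m x)^2) with hf'
  have hderiv : ∀ x ∈ Set.Ioi (0:ℝ), HasDerivAt F (f' x) x := by
    intro x hx
    have hx0 : (0:ℝ) < x := hx
    have hA : 0 < U β (m+1) x := U_pos β hβ (m+1) hx0.le
    have hB : 0 < U β m x := U_pos β hβ m hx0.le
    have hd1 : HasDerivAt (fun y : ℝ => y ^ (α+1)) ((α+1) * x ^ α) x := by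
      have := Real.hasDerivAt_rpow_const (x := x) (p := α+1) (Or.inl hx0.ne')
      rwa [show α + 1 - 1 = α by ring] at this
    have hd2 : HasDerivAt (fun y : ℝ => Real.exp (-y)) (-Real.exp (-x)) x := by
      have := (Real.hasDerivAt_exp (-x)).comp x (hasDerivAt_neg x)
      simp at this; exact this
    have hnum : HasDerivAt (fun y : ℝ => y ^ (α+1) * Real.exp (-y))
        ((α+1) * x ^ α * Real.exp (-x) + x ^ (α+1) * (-Real.exp (-x))) x := hd1.mul hd2
    have hden : HasDerivAt (fun y : ℝ => U β (m+1) y * U β m y)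
        (U (β+1) m x * U β m x + U β (m+1) x * (U (β+1) m x - U β m x)) x :=
      (hasDerivAt_U β m x).mul (hasDerivAt_U' β m x)
    have hquot := hnum.div hden (by positivity)
    have he1 : x * U (β+1) m x = ((m:ℝ)+1) * U β (m+1) x - ((m:ℝ)+β+1) * U β m x :=
      U_mul_x β m x
    have hCval : U (β+1) m x
        = (((m:ℝ)+1) * U β (m+1) x - ((m:ℝ)+β+1) * U β m x) / x := by
      field_simp
      linarith [he1]
    have hxa : x ^ (α+1) = x ^ α * x := by
      rw [Real.rpow_add hx0, Real.rpow_one]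
    have hfeq : f' x =
        (((α+1) * x ^ α * Real.exp (-x) + x ^ (α+1) * (-Real.exp (-x)))
            * (U β (m+1) x * U β m x)
          - x ^ (α+1) * Real.exp (-x)
            * (U (β+1) m x * U β m x + U β (m+1) x * (U (β+1) m x - U β m x)))
          / (U β (m+1) x * U β m x)^2 := by
      rw [hf', hCval, hxa]
      have hmβ : (m:ℝ) + β + 1 = (m:ℝ) - α := by rw [hβdef]; ring
      rw [hmβ]
      field_simp
      ring
    rw [hfeq]
    exact hquot
  have f'int : IntegrableOn f' (Set.Ioi (0:ℝ)) :=
    ((g_int hα1 hα2 (m+1)).const_mul _).sub ((g_int hα1 hα2 m).const_mul _)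
  have hcont : ContinuousWithinAt F (Set.Ici (0:ℝ)) 0 := by
    apply ContinuousAt.continuousWithinAt
    apply ContinuousAt.div
    · exact (Real.continuousAt_rpow_const 0 (α+1) (Or.inr (by linarith))).mul
        (Real.continuous_exp.comp continuous_neg).continuousAt
    · exact ((continuous_U β (m+1)).mul (continuous_U β m)).continuousAt
    · exact (mul_pos (U_pos β hβ (m+1) le_rfl) (U_pos β hβ m le_rfl)).ne'
  have htop : Tendsto F atTop (𝓝 (0:ℝ)) := by
    have hK : 0 < U β (m+1) 0 * U β m 0 :=
      mul_pos (U_pos β hβ (m+1) le_rfl) (U_pos β hβ m le_rfl)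
    have h1 : Tendsto (fun x : ℝ => (1/(U β (m+1) 0 * U β m 0))
        * (x ^ (α+1) * Real.exp (-1*x))) atTop (𝓝 ((1/(U β (m+1) 0 * U β m 0)) * 0)) :=
      (tendsto_rpow_mul_exp_neg_mul_atTop_nhds_zero (α+1) 1 one_pos).const_mul _
    rw [mul_zero] at h1
    apply tendsto_of_tendsto_of_tendsto_of_le_of_le' tendsto_const_nhds h1
    · filter_upwards [eventually_ge_atTop (0:ℝ)] with x hx
      have hA : 0 < U β (m+1) x := U_pos β hβ (m+1) hx
      have hB : 0 < U β m x := U_pos β hβ m hx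
      have : 0 ≤ x ^ (α+1) := Real.rpow_nonneg hx _
      have := Real.exp_pos (-x)
      positivity
    · filter_upwards [eventually_ge_atTop (0:ℝ)] with x hx
      have hA : U β (m+1) 0 ≤ U β (m+1) x := U_zero_le β hβ (m+1) hx
      have hB : U β m 0 ≤ U β m x := U_zero_le β hβ m hx
      have hA0 : 0 < U β (m+1) 0 := U_pos β hβ (m+1) le_rfl
      have hB0 : 0 < U β m 0 := U_pos β hβ m le_rfl
      have hnum : 0 ≤ x ^ (α+1) * Real.exp (-x) := by
        have : 0 ≤ x ^ (α+1) := Real.rpow_nonneg hx _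
        positivity
      have hden : U β (m+1) 0 * U β m 0 ≤ U β (m+1) x * U β m x := by nlinarith
      calc F x ≤ x ^ (α+1) * Real.exp (-x) / (U β (m+1) 0 * U β m 0) :=
            div_le_div_of_nonneg_left hnum hK hden
        _ = 1/(U β (m+1) 0 * U β m 0) * (x ^ (α+1) * Real.exp (-1*x)) := by
            rw [neg_one_mul]; ring
  have key := integral_Ioi_of_hasDerivAt_of_tendsto hcont hderiv f'int htop
  have hF0 : F 0 = 0 := by
    rw [hF]
    simp only
    rw [Real.zero_rpow (by linarith : α + 1 ≠ 0)]
    simp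
  rw [hF0, zero_sub, neg_zero] at key
  have hsplit : ∫ x in Set.Ioi (0:ℝ), f' x
      = ((m:ℝ) - α) * (∫ x in Set.Ioi (0:ℝ), x ^ α * Real.exp (-x) / (U β (m+1) x)^2)
        - ((m:ℝ) + 1) * (∫ x in Set.Ioi (0:ℝ), x ^ α * Real.exp (-x) / (U β m x)^2) := by
    rw [hf']
    rw [integral_sub ((g_int hα1 hα2 (m+1)).const_mul _) ((g_int hα1 hα2 m).const_mul _)]
    rw [integral_const_mul, integral_const_mul]
  rw [key] at hsplit
  linarith [hsplit]

lemma base_eq (hα1 : -1 < α) (hα2 : α < 0) :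
    (∫ x in Set.Ioi (0:ℝ), x ^ α * Real.exp (-x) / (U (-α-1) 0 x)^2)
      = Real.Gamma (α+1) := by
  rw [Real.Gamma_eq_integral (by linarith : (0:ℝ) < α+1)]
  apply setIntegral_congr_fun measurableSet_Ioi
  intro x _
  simp only [U, lag_zero]
  rw [show α + 1 - 1 = α by ring]
  ring

end Analysis

/-- for `-1 < α < 0`,
`∫_0^∞ x^α e^{-x}/(L_m^{-α-1}(-x))² dx = m! (-1)^m Γ(1+α-m) = Γ(α+1)Γ(-α)m!/Γ(m-α)`. -/
theorem typeIII_weight_integral (α : ℝ) (hα1 : -1 < α) (hα2 : α < 0) (m : ℕ) :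
    (∫ x in Set.Ioi (0 : ℝ), x ^ α * Real.exp (-x) / (lag (-α - 1) m (-x)) ^ 2)
        = (Nat.factorial m : ℝ) * (-1) ^ m * Real.Gamma (1 + α - m)
      ∧ (∫ x in Set.Ioi (0 : ℝ), x ^ α * Real.exp (-x) / (lag (-α - 1) m (-x)) ^ 2)
        = Real.Gamma (α + 1) * Real.Gamma (-α) * (Nat.factorial m : ℝ)
            / Real.Gamma ((m : ℝ) - α) := by
  have hint : ∀ n : ℕ, (∫ x in Set.Ioi (0 : ℝ), x ^ α * Real.exp (-x) / (lag (-α - 1) n (-x)) ^ 2)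
      = ∫ x in Set.Ioi (0:ℝ), x ^ α * Real.exp (-x) / (U (-α-1) n x)^2 := by
    intro n; rfl
  have hrec : ∀ n : ℕ,
      (∫ x in Set.Ioi (0:ℝ), x ^ α * Real.exp (-x) / (U (-α-1) (n+1) x)^2)
      = ((n:ℝ)+1)/((n:ℝ)-α)
        * ∫ x in Set.Ioi (0:ℝ), x ^ α * Real.exp (-x) / (U (-α-1) n x)^2 := by
    intro n
    have hne : (n:ℝ) - α ≠ 0 := by
      have : (0:ℝ) ≤ n := Nat.cast_nonneg n
      intro h; nlinarith
    have := step_eq hα1 hα2 n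
    field_simp
    linarith [this]
  constructor
  · rw [hint]
    induction m with
    | zero =>
      rw [show ((1:ℝ) + α - ((0:ℕ):ℝ)) = α + 1 by push_cast; ring]
      simpa using base_eq hα1 hα2
    | succ n ih =>
      rw [hrec n, ih]
      have hne : (n:ℝ) - α ≠ 0 := by
        have : (0:ℝ) ≤ n := Nat.cast_nonneg n
        intro h; nlinarith
      have hαm : α - (n:ℝ) ≠ 0 := by intro h; apply hne; linarith
      have hG : Real.Gamma (1 + α - (n:ℝ)) = (α - (n:ℝ)) * Real.Gamma (α - (n:ℝ)) := by
        rw [show (1:ℝ) + α - (n:ℝ) = (α - (n:ℝ)) + 1 by ring]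
        exact Real.Gamma_add_one hαm
      have hcast : ((n+1 : ℕ) : ℝ) = (n:ℝ) + 1 := by push_cast; ring
      rw [show (1:ℝ) + α - ((n+1 : ℕ):ℝ) = α - (n:ℝ) by push_cast; ring]
      rw [Nat.factorial_succ]
      push_cast
      rw [hG]
      field_simp
      ring
  · rw [hint]
    induction m with
    | zero =>
      have h0 : Real.Gamma (((0:ℕ):ℝ) - α) = Real.Gamma (-α) := by norm_num
      have hne : Real.Gamma (-α) ≠ 0 := (Real.Gamma_pos_of_pos (by linarith)).ne'
      rw [h0]
      simp only [Nat.factorial_zero, Nat.cast_one, mul_one]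
      rw [base_eq hα1 hα2]
      field_simp
    | succ n ih =>
      rw [hrec n, ih]
      have hpos : (0:ℝ) < (n:ℝ) - α := by
        have : (0:ℝ) ≤ n := Nat.cast_nonneg n
        linarith
      have hne : (n:ℝ) - α ≠ 0 := hpos.ne'
      have hGne : Real.Gamma ((n:ℝ) - α) ≠ 0 := (Real.Gamma_pos_of_pos hpos).ne'
      have hG : Real.Gamma (((n+1 : ℕ):ℝ) - α) = ((n:ℝ) - α) * Real.Gamma ((n:ℝ) - α) := by
        rw [show ((n+1 : ℕ):ℝ) - α = ((n:ℝ) - α) + 1 by push_cast; ring]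
        exact Real.Gamma_add_one hne
      rw [Nat.factorial_succ, hG]
      push_cast
      field_simp
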